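/- For every α∈(0,1) there exists a constant c*>0, depending only on α, such that for every C>0, every integer j≥3 and every s>0 satisfying 2(α(j−2)+1)^{2α} ≤ CΓ(α+1)·s^α, one has ∑_{k=1}^{j−2} ρ_{k−1} ρ_k ρ_{j−k−1} · B(α(2k−1)+1, α) · s^{α(j+k−1)} ≤ c* · (CΓ(α+1))^{2j−3} · s^{2α(j−1)} / (Γ(α(j−2)+1))^2, where ρ_i=(CΓ(α+1))^i/Γ(αi+1) and B is the Euler beta function. -/

import Mathlib

/-- Wendel-type inequality from log-convexity: Γ(x+t) ≤ x^t Γ(x) for 0<x, 0≤t≤1. -/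
lemma gamma_wendel (x t : ℝ) (hx : 0 < x) (ht0 : 0 ≤ t) (ht1 : t ≤ 1) :
    Real.Gamma (x + t) ≤ x ^ t * Real.Gamma x := by
  have hx1 : (0:ℝ) < x + 1 := by linarith
  have hxt : (0:ℝ) < x + t := by linarith
  have h := Real.convexOn_log_Gamma.2 (Set.mem_Ioi.mpr hx) (Set.mem_Ioi.mpr hx1)
    (by linarith : (0:ℝ) ≤ 1 - t) ht0 (by ring)
  simp only [smul_eq_mul, Function.comp_apply] at h
  have he : (1 - t) * x + t * (x + 1) = x + t := by ring
  rw [he] at h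
  have hlg : Real.log (Real.Gamma (x+1)) = Real.log x + Real.log (Real.Gamma x) := by
    rw [Real.Gamma_add_one hx.ne', Real.log_mul hx.ne' (Real.Gamma_pos_of_pos hx).ne']
  rw [hlg] at h
  have h2 : Real.log (Real.Gamma (x+t)) ≤ t * Real.log x + Real.log (Real.Gamma x) := by
    have heq : (1 - t) * Real.log (Real.Gamma x)
        + t * (Real.log x + Real.log (Real.Gamma x))
        = t * Real.log x + Real.log (Real.Gamma x) := by ring
    linarith [heq ▸ h]
  calc Real.Gamma (x + t) = Real.exp (Real.log (Real.Gamma (x+t))) :=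
        (Real.exp_log (Real.Gamma_pos_of_pos hxt)).symm
    _ ≤ Real.exp (t * Real.log x + Real.log (Real.Gamma x)) := Real.exp_le_exp.mpr h2
    _ = x ^ t * Real.Gamma x := by
        rw [Real.exp_add, Real.exp_log (Real.Gamma_pos_of_pos hx),
          mul_comm t (Real.log x), ← Real.rpow_def_of_pos hx]

/-- Γ(x) ≥ 1/2 for x ≥ 1. -/
lemma half_le_gamma (x : ℝ) (hx : 1 ≤ x) : (1/2 : ℝ) ≤ Real.Gamma x := by
  rcases le_or_gt x 2 with h2 | h2
  · have h := gamma_wendel x (2 - x) (by linarith) (by linarith) (by linarith)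
    have he : x + (2 - x) = 2 := by ring
    rw [he, Real.Gamma_two] at h
    have hb : x ^ (2 - x) ≤ 2 := by
      calc x ^ (2 - x) ≤ x ^ (1:ℝ) :=
            Real.rpow_le_rpow_of_exponent_le hx (by linarith)
        _ = x := Real.rpow_one x
        _ ≤ 2 := h2
    have hg : 0 < Real.Gamma x := Real.Gamma_pos_of_pos (by linarith)
    nlinarith
  · have hx1 : x - 1 ≠ 0 := by linarith
    have h := Real.convexOn_log_Gamma.2 (Set.mem_Ioi.mpr one_pos)
      (Set.mem_Ioi.mpr (show (0:ℝ) < x by linarith))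
      (show (0:ℝ) ≤ (x-2)/(x-1) by apply div_nonneg <;> linarith)
      (show (0:ℝ) ≤ 1/(x-1) by apply div_nonneg <;> linarith)
      (by rw [← add_div, show x-2+1 = x-1 by ring]; exact div_self hx1)
    simp only [smul_eq_mul, Function.comp_apply] at h
    have he : (x-2)/(x-1) * 1 + 1/(x-1) * x = 2 := by field_simp; ring
    rw [he, Real.Gamma_two, Real.Gamma_one, Real.log_one] at h
    have hlog : 0 ≤ Real.log (Real.Gamma x) := by
      by_contra hneg
      push_neg at hneg
      have : 1/(x-1) * Real.log (Real.Gamma x) < 0 := by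
        apply mul_neg_of_pos_of_neg (by apply div_pos one_pos; linarith) hneg
      linarith
    have hg : 0 < Real.Gamma x := Real.Gamma_pos_of_pos (by linarith)
    calc (1/2:ℝ) ≤ 1 := by norm_num
      _ = Real.exp 0 := Real.exp_zero.symm
      _ ≤ Real.exp (Real.log (Real.Gamma x)) := Real.exp_le_exp.mpr hlog
      _ = Real.Gamma x := Real.exp_log hg

/-- Γ(y) ≤ 2 Γ(y+α) for y ≥ 1, 0 < α ≤ 1. -/
lemma gamma_ratio_le (α y : ℝ) (hα0 : 0 < α) (hα1 : α ≤ 1) (hy : 1 ≤ y) :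
    Real.Gamma y ≤ 2 * Real.Gamma (y + α) := by
  have hya : (0:ℝ) < y + α := by linarith
  have h1 : Real.Gamma (y + 1) ≤ (y+α) ^ (1-α) * Real.Gamma (y+α) := by
    have := gamma_wendel (y+α) (1-α) hya (by linarith) (by linarith)
    have he : y + α + (1 - α) = y + 1 := by ring
    rwa [he] at this
  have h2 : (y+α) ^ (1-α) ≤ 2 * y := by
    calc (y+α) ^ (1-α) ≤ (y+α) ^ (1:ℝ) :=
          Real.rpow_le_rpow_of_exponent_le (by linarith) (by linarith)
      _ = y + α := Real.rpow_one _
      _ ≤ 2 * y := by linarith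
  rw [Real.Gamma_add_one (by linarith : y ≠ 0)] at h1
  have hg : 0 ≤ Real.Gamma (y+α) := (Real.Gamma_pos_of_pos hya).le
  have key : y * Real.Gamma y ≤ 2 * y * Real.Gamma (y+α) := by
    calc y * Real.Gamma y ≤ (y+α)^(1-α) * Real.Gamma (y+α) := h1
      _ ≤ 2 * y * Real.Gamma (y+α) := mul_le_mul_of_nonneg_right h2 hg
  have hy0 : 0 < y := by linarith
  nlinarith

/-- Chain bound: Γ(α(i+d)+1) ≤ (α(i+d)+1)^(αd) Γ(αi+1). -/
lemma gamma_chain (α : ℝ) (hα0 : 0 < α) (hα1 : α ≤ 1) (d i : ℕ) :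
    Real.Gamma (α * (↑(i+d)) + 1)
      ≤ (α * (↑(i+d)) + 1) ^ (α * (d:ℝ)) * Real.Gamma (α * (i:ℝ) + 1) := by
  induction d with
  | zero => simp
  | succ d ih =>
    have hnn : (0:ℝ) ≤ α * (↑(i+d)) := by positivity
    have hnn' : (0:ℝ) ≤ α * (↑(i+(d+1))) := by positivity
    have hbase : (1:ℝ) ≤ α * (↑(i+d)) + 1 := by linarith
    have hbase' : (1:ℝ) ≤ α * (↑(i+(d+1))) + 1 := by linarith
    have hmono : (α * (↑(i+d)) + 1) ≤ (α * (↑(i+(d+1))) + 1) := by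
      push_cast; nlinarith
    have h1 : Real.Gamma (α * (↑(i+(d+1))) + 1)
        ≤ (α * (↑(i+d)) + 1) ^ α * Real.Gamma (α * (↑(i+d)) + 1) := by
      have := gamma_wendel (α * (↑(i+d)) + 1) α (by linarith) hα0.le hα1
      have he : α * (↑(i+d)) + 1 + α = α * (↑(i+(d+1))) + 1 := by push_cast; ring
      rwa [he] at this
    have hg : 0 ≤ Real.Gamma (α * (i:ℝ) + 1) := (Real.Gamma_pos_of_pos (by positivity)).le
    have hexp : α + α * (d:ℝ) = α * ((d+1:ℕ):ℝ) := by push_cast; ring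
    calc Real.Gamma (α * (↑(i+(d+1))) + 1)
        ≤ (α * (↑(i+d)) + 1) ^ α * Real.Gamma (α * (↑(i+d)) + 1) := h1
      _ ≤ (α * (↑(i+d)) + 1) ^ α
            * ((α * (↑(i+d)) + 1) ^ (α * (d:ℝ)) * Real.Gamma (α * (i:ℝ) + 1)) := by
          apply mul_le_mul_of_nonneg_left ih (by positivity)
      _ = (α * (↑(i+d)) + 1) ^ (α + α * (d:ℝ)) * Real.Gamma (α * (i:ℝ) + 1) := by
          rw [← mul_assoc, ← Real.rpow_add (by linarith)]
      _ ≤ (α * (↑(i+(d+1))) + 1) ^ (α + α * (d:ℝ)) * Real.Gamma (α * (i:ℝ) + 1) := by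
          apply mul_le_mul_of_nonneg_right _ hg
          exact Real.rpow_le_rpow (by linarith) hmono (by positivity)
      _ = (α * (↑(i+(d+1))) + 1) ^ (α * ((d+1:ℕ):ℝ)) * Real.Gamma (α * (i:ℝ) + 1) := by
          rw [hexp]

/-- Geometric tail sum. -/
lemma geo_sum_le (m : ℕ) : ∑ k ∈ Finset.Icc 1 m, (1/2:ℝ)^(m+1-k) ≤ 1 := by
  induction m with
  | zero => simp
  | succ m ih =>
    rw [Finset.sum_Icc_succ_top (by omega : 1 ≤ m+1)]
    have hcg : ∀ k ∈ Finset.Icc 1 m, (1/2:ℝ)^(m+1+1-k) = (1/2:ℝ) * (1/2:ℝ)^(m+1-k) := by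
      intro k hk
      simp only [Finset.mem_Icc] at hk
      rw [show m+1+1-k = (m+1-k)+1 by omega, pow_succ]
      ring
    rw [Finset.sum_congr rfl hcg, ← Finset.mul_sum, show m+1+1-(m+1) = 1 by omega]
    nlinarith [ih]


set_option maxHeartbeats 1000000


/- For every α ∈ (0,1) there is a constant c* > 0 depending only on α such that for
every C > 0, every integer j ≥ 3 and every s > 0 with
2(α(j−2)+1)^{2α} ≤ CΓ(α+1) s^α, one has
∑_{k=1}^{j−2} ρ_{k−1} ρ_k ρ_{j−k−1} B(α(2k−1)+1, α) s^{α(j+k−1)}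
  ≤ c* (CΓ(α+1))^{2j−3} s^{2α(j−1)} / Γ(α(j−2)+1)²,
where ρ_i = (CΓ(α+1))^i / Γ(αi+1) and B(x,y) = Γ(x)Γ(y)/Γ(x+y). -/
theorem sum_convolution_bound (α : ℝ) (hα : α ∈ Set.Ioo (0:ℝ) 1) :
    ∃ cstar > (0:ℝ), ∀ C > (0:ℝ), ∀ j : ℕ, 3 ≤ j → ∀ s > (0:ℝ),
      2 * (α * ((j : ℝ) - 2) + 1) ^ (2 * α) ≤ C * Real.Gamma (α + 1) * s ^ α →
      ∑ k ∈ Finset.Icc 1 (j - 2),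
          ((C * Real.Gamma (α + 1)) ^ (k - 1) / Real.Gamma (α * ((k : ℝ) - 1) + 1)) *
          ((C * Real.Gamma (α + 1)) ^ k / Real.Gamma (α * (k : ℝ) + 1)) *
          ((C * Real.Gamma (α + 1)) ^ (j - k - 1)
            / Real.Gamma (α * ((j : ℝ) - (k : ℝ) - 1) + 1)) *
          (Real.Gamma (α * (2 * (k : ℝ) - 1) + 1) * Real.Gamma α
            / Real.Gamma (α * (2 * (k : ℝ) - 1) + 1 + α)) *
          s ^ (α * ((j : ℝ) + (k : ℝ) - 1))
        ≤ cstar * (C * Real.Gamma (α + 1)) ^ (2 * j - 3) * s ^ (2 * α * ((j : ℝ) - 1))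
            / (Real.Gamma (α * ((j : ℝ) - 2) + 1)) ^ 2 := by
  obtain ⟨hα0, hα1⟩ := hα
  have hΓα : 0 < Real.Gamma α := Real.Gamma_pos_of_pos hα0
  refine ⟨4 * Real.Gamma α, by positivity, ?_⟩
  intro C hC j hj s hs hyp
  set A := C * Real.Gamma (α + 1) with hAdef
  have hA : 0 < A := mul_pos hC (Real.Gamma_pos_of_pos (by linarith))
  set m := j - 2 with hmdef
  have hjm : j = m + 2 := by omega
  have hm1 : 1 ≤ m := by omega
  have hmR : (m:ℝ) = (j:ℝ) - 2 := by
    have : (j:ℝ) = (m:ℝ) + 2 := by exact_mod_cast congrArg (Nat.cast (R := ℝ)) hjm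
    linarith
  set P := α * (m:ℝ) + 1 with hPdef
  have hPnn : (0:ℝ) ≤ α * (m:ℝ) := by positivity
  have hP1 : (1:ℝ) ≤ P := by rw [hPdef]; linarith
  have hp0 : (0:ℝ) < P := by linarith
  have hyp' : 2 * P ^ (2*α) ≤ A * s ^ α := by rw [hPdef, hmR]; exact hyp
  rw [show α * ((j:ℝ) - 2) + 1 = α * (m:ℝ) + 1 by rw [hmR]]
  set gm := Real.Gamma (α * (m:ℝ) + 1) with hgmdef
  have hgm0 : 0 < gm := Real.Gamma_pos_of_pos (by positivity)
  set E := 2 * α * ((j:ℝ) - 1) with hEdef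
  have key : ∀ k ∈ Finset.Icc 1 m,
      (A ^ (k - 1) / Real.Gamma (α * ((k : ℝ) - 1) + 1)) *
      (A ^ k / Real.Gamma (α * (k : ℝ) + 1)) *
      (A ^ (j - k - 1) / Real.Gamma (α * ((j : ℝ) - (k : ℝ) - 1) + 1)) *
      (Real.Gamma (α * (2 * (k : ℝ) - 1) + 1) * Real.Gamma α
        / Real.Gamma (α * (2 * (k : ℝ) - 1) + 1 + α)) *
      s ^ (α * ((j : ℝ) + (k : ℝ) - 1))
      ≤ (4 * Real.Gamma α * A ^ (2*j - 3) * s ^ E / gm ^ 2) * (1/2:ℝ) ^ (m + 1 - k) := by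
    intro k hk
    simp only [Finset.mem_Icc] at hk
    obtain ⟨hk1, hkm⟩ := hk
    set n := m + 1 - k with hndef
    have hn1 : 1 ≤ n := by omega
    have hjk : j - k - 1 = n := by omega
    have hnkj : n + k + 1 = j := by omega
    have hnR : (n:ℝ) = (j:ℝ) - (k:ℝ) - 1 := by
      have : ((n + k + 1 : ℕ) : ℝ) = (j:ℝ) := by exact_mod_cast congrArg (Nat.cast (R := ℝ)) hnkj
      push_cast at this
      linarith
    have hkR1 : (1:ℝ) ≤ (k:ℝ) := by exact_mod_cast hk1
    set g1 := Real.Gamma (α * ((k : ℝ) - 1) + 1) with hg1def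
    set g2 := Real.Gamma (α * (k : ℝ) + 1) with hg2def
    set g3 := Real.Gamma (α * ((j : ℝ) - (k : ℝ) - 1) + 1) with hg3def
    set g5 := Real.Gamma (α * (2 * (k : ℝ) - 1) + 1) with hg5def
    set g4 := Real.Gamma (α * (2 * (k : ℝ) - 1) + 1 + α) with hg4def
    have hg1p : 0 < g1 := Real.Gamma_pos_of_pos (by nlinarith)
    have hg2p : 0 < g2 := Real.Gamma_pos_of_pos (by nlinarith)
    have hnR1 : (1:ℝ) ≤ (j:ℝ) - (k:ℝ) - 1 := by
      rw [← hnR]; exact_mod_cast hn1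
    have hg3p : 0 < g3 := Real.Gamma_pos_of_pos (by nlinarith [hnR1])
    have hg5p : 0 < g5 := Real.Gamma_pos_of_pos (by nlinarith)
    have hg4p : 0 < g4 := Real.Gamma_pos_of_pos (by nlinarith)
    -- f1 : gm ≤ P^(α n) g1
    have f1 : gm ≤ P ^ (α * (n:ℝ)) * g1 := by
      have h := gamma_chain α hα0 hα1.le n (k-1)
      have hsum : (k-1) + n = m := by omega
      rw [hsum] at h
      have hc : ((k-1:ℕ):ℝ) = (k:ℝ) - 1 := by
        have : ((k-1:ℕ):ℝ) + 1 = (k:ℝ) := by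
          exact_mod_cast congrArg (Nat.cast (R := ℝ)) (by omega : (k-1) + 1 = k)
        linarith
      rw [hc] at h
      exact h
    -- f2 : gm ≤ P^(α n) g2
    have f2 : gm ≤ P ^ (α * (n:ℝ)) * g2 := by
      have h := gamma_chain α hα0 hα1.le (m-k) k
      have hsum : k + (m-k) = m := by omega
      rw [hsum] at h
      refine h.trans (mul_le_mul_of_nonneg_right ?_ hg2p.le)
      apply Real.rpow_le_rpow_of_exponent_le hP1
      have : ((m-k:ℕ):ℝ) ≤ (n:ℝ) := by exact_mod_cast (by omega : m - k ≤ n)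
      nlinarith
    -- f3 : 1 ≤ 2 g3
    have f3 : (1:ℝ) ≤ 2 * g3 := by
      have harg : (1:ℝ) ≤ α * ((j:ℝ) - (k:ℝ) - 1) + 1 := by nlinarith [hnR1]
      have := half_le_gamma _ harg
      rw [← hg3def] at this
      linarith
    -- f4 : g5 ≤ 2 g4
    have f4 : g5 ≤ 2 * g4 := by
      have harg : (1:ℝ) ≤ α * (2 * (k:ℝ) - 1) + 1 := by nlinarith
      exact gamma_ratio_le α _ hα0 hα1.le harg
    -- f5
    have h0 : (2 * P ^ (2*α)) ^ n ≤ (A * s ^ α) ^ n := pow_le_pow_left₀ (by positivity) hyp' n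
    have hL : (2 * P ^ (2*α)) ^ n = 2 ^ n * P ^ (2*α*(n:ℝ)) := by
      rw [mul_pow, ← Real.rpow_natCast (P ^ (2*α)) n, ← Real.rpow_mul hp0.le]
    have hR : (A * s ^ α) ^ n = A ^ n * s ^ (α*(n:ℝ)) := by
      rw [mul_pow, ← Real.rpow_natCast (s ^ α) n, ← Real.rpow_mul hs.le]
    have f5 : 2 ^ n * P ^ (α*(n:ℝ) + α*(n:ℝ)) * s ^ (α * ((j:ℝ) + (k:ℝ) - 1))
        ≤ A ^ n * s ^ E := by
      have he2 : α*(n:ℝ) + α*((j:ℝ)+(k:ℝ)-1) = E := by rw [hEdef, hnR]; ring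
      calc 2 ^ n * P ^ (α*(n:ℝ) + α*(n:ℝ)) * s ^ (α * ((j:ℝ) + (k:ℝ) - 1))
          = (2 * P ^ (2*α)) ^ n * s ^ (α * ((j:ℝ) + (k:ℝ) - 1)) := by
            rw [hL, show α*(n:ℝ) + α*(n:ℝ) = 2*α*(n:ℝ) from by ring]
        _ ≤ (A * s ^ α) ^ n * s ^ (α * ((j:ℝ) + (k:ℝ) - 1)) :=
            mul_le_mul_of_nonneg_right h0 (by positivity)
        _ = A ^ n * (s ^ (α*(n:ℝ)) * s ^ (α * ((j:ℝ) + (k:ℝ) - 1))) := by rw [hR]; ring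
        _ = A ^ n * s ^ E := by rw [← Real.rpow_add hs, he2]
    -- assemble
    rw [hjk]
    have lhs_eq : (A ^ (k-1) / g1) * (A ^ k / g2) * (A ^ n / g3) *
        (g5 * Real.Gamma α / g4) * s ^ (α * ((j:ℝ) + (k:ℝ) - 1))
        = (A ^ (k-1) * A ^ k * A ^ n * (g5 * Real.Gamma α) * s ^ (α * ((j:ℝ) + (k:ℝ) - 1)))
          / (g1 * g2 * g3 * g4) := by
      field_simp
    have rhs_eq : (4 * Real.Gamma α * A ^ (2*j - 3) * s ^ E / gm ^ 2) * (1/2:ℝ) ^ n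
        = (4 * Real.Gamma α * A ^ (2*j - 3) * s ^ E) / (gm ^ 2 * 2 ^ n) := by
      rw [div_pow, one_pow, div_mul_div_comm, mul_one]
    rw [lhs_eq, rhs_eq, div_le_div_iff₀ (by positivity) (by positivity)]
    have hpp : P ^ (α*(n:ℝ)) * P ^ (α*(n:ℝ)) = P ^ (α*(n:ℝ) + α*(n:ℝ)) :=
      (Real.rpow_add hp0 _ _).symm
    have hpow : A ^ (k-1) * A ^ k * A ^ n * A ^ n = A ^ (2*j - 3) := by
      rw [← pow_add, ← pow_add, ← pow_add]
      congr 1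
      omega
    calc A ^ (k-1) * A ^ k * A ^ n * (g5 * Real.Gamma α) * s ^ (α * ((j:ℝ) + (k:ℝ) - 1))
          * (gm ^ 2 * 2 ^ n)
        = (A ^ (k-1) * A ^ k * A ^ n * Real.Gamma α) * g5 * (gm * gm)
            * (2 ^ n * s ^ (α * ((j:ℝ) + (k:ℝ) - 1))) * 1 := by ring
      _ ≤ (A ^ (k-1) * A ^ k * A ^ n * Real.Gamma α) * (2 * g4)
            * ((P ^ (α*(n:ℝ)) * g1) * (P ^ (α*(n:ℝ)) * g2))
            * (2 ^ n * s ^ (α * ((j:ℝ) + (k:ℝ) - 1))) * (2 * g3) := by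
          have hmm : gm * gm ≤ (P ^ (α*(n:ℝ)) * g1) * (P ^ (α*(n:ℝ)) * g2) :=
            mul_le_mul f1 f2 hgm0.le (by positivity)
          have h4 := f4
          have h3 := f3
          gcongr <;> positivity
      _ = 4 * Real.Gamma α * (A ^ (k-1) * A ^ k * A ^ n) * (g1 * g2 * g3 * g4)
            * (2 ^ n * (P ^ (α*(n:ℝ)) * P ^ (α*(n:ℝ)))
              * s ^ (α * ((j:ℝ) + (k:ℝ) - 1))) := by ring
      _ = 4 * Real.Gamma α * (A ^ (k-1) * A ^ k * A ^ n) * (g1 * g2 * g3 * g4)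
            * (2 ^ n * P ^ (α*(n:ℝ) + α*(n:ℝ)) * s ^ (α * ((j:ℝ) + (k:ℝ) - 1))) := by
          rw [hpp]
      _ ≤ 4 * Real.Gamma α * (A ^ (k-1) * A ^ k * A ^ n) * (g1 * g2 * g3 * g4)
            * (A ^ n * s ^ E) := by
          apply mul_le_mul_of_nonneg_left f5 (by positivity)
      _ = 4 * Real.Gamma α * A ^ (2*j - 3) * s ^ E * (g1 * g2 * g3 * g4) := by
          rw [← hpow]; ring
  calc ∑ k ∈ Finset.Icc 1 m,
        (A ^ (k - 1) / Real.Gamma (α * ((k : ℝ) - 1) + 1)) *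
        (A ^ k / Real.Gamma (α * (k : ℝ) + 1)) *
        (A ^ (j - k - 1) / Real.Gamma (α * ((j : ℝ) - (k : ℝ) - 1) + 1)) *
        (Real.Gamma (α * (2 * (k : ℝ) - 1) + 1) * Real.Gamma α
          / Real.Gamma (α * (2 * (k : ℝ) - 1) + 1 + α)) *
        s ^ (α * ((j : ℝ) + (k : ℝ) - 1))
      ≤ ∑ k ∈ Finset.Icc 1 m,
          (4 * Real.Gamma α * A ^ (2*j - 3) * s ^ E / gm ^ 2) * (1/2:ℝ) ^ (m + 1 - k) :=
        Finset.sum_le_sum key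
    _ = (4 * Real.Gamma α * A ^ (2*j - 3) * s ^ E / gm ^ 2)
          * ∑ k ∈ Finset.Icc 1 m, (1/2:ℝ) ^ (m + 1 - k) := (Finset.mul_sum _ _ _).symm
    _ ≤ (4 * Real.Gamma α * A ^ (2*j - 3) * s ^ E / gm ^ 2) * 1 :=
        mul_le_mul_of_nonneg_left (geo_sum_le m) (by positivity)
    _ = 4 * Real.Gamma α * A ^ (2*j - 3) * s ^ E / gm ^ 2 := mul_one _
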